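/- Let X be a real Banach space with dual X*, and let f : X → ℝ be Gâteaux differentiable with gradient ∇f : X → X*. Suppose f is bounded on bounded subsets of X and uniformly Fréchet differentiable on bounded subsets of X, i.e., for every bounded B ⊆ X, sup_{x∈B, ‖y‖=1} |f(x + t y) − f(x) − t⟨∇f(x), y⟩| / t → 0 as t → 0⁺. Then ∇f is norm-to-norm uniformly continuous on bounded subsets of X: for every bounded B ⊆ X and every ε > 0 there exists δ > 0 such that x, x' ∈ B and ‖x − x'‖ < δ imply ‖∇f(x) − ∇f(x')‖_{X*} < ε. -/

import Mathlib

open Filter Topology Set Pointwise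

private lemma hasDerivAt_along' {X : Type*} [NormedAddCommGroup X] [NormedSpace ℝ X]
    (f : X → ℝ) (gf : X → X →L[ℝ] ℝ)
    (hgf : ∀ p v : X, HasLineDerivAt ℝ f (gf p v) p v) (w v : X) (s : ℝ) :
    HasDerivAt (fun t : ℝ => f (w + t • v)) (gf (w + s • v) v) s := by
  have h := hgf (w + s • v) v
  unfold HasLineDerivAt at h
  have h2 : HasDerivAt (fun t : ℝ => f (w + s • v + (t - s) • v)) (gf (w + s • v) v) s := by
    have hin : HasDerivAt (fun t : ℝ => t - s) 1 s := (hasDerivAt_id s).sub_const s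
    have h3 : HasDerivAt ((fun t : ℝ => f (w + s • v + t • v)) ∘ fun t : ℝ => t - s)
        ((1:ℝ) • gf (w + s • v) v) s := HasDerivAt.scomp s (by simpa using h) hin
    rw [one_smul] at h3
    exact h3
  have he : (fun t : ℝ => f (w + t • v)) = fun t : ℝ => f (w + s • v + (t - s) • v) := by
    funext t; congr 1; module
  rw [he]; exact h2

private lemma opnorm_unit' {X : Type*} [NormedAddCommGroup X] [NormedSpace ℝ X]
    (T : X →L[ℝ] ℝ) (c : ℝ) (hc : 0 ≤ c) (h : ∀ y : X, ‖y‖ = 1 → |T y| ≤ c) : ‖T‖ ≤ c := by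
  refine T.opNorm_le_bound hc fun z => ?_
  rcases eq_or_ne z 0 with rfl | hz
  · simp
  · have hn : ‖z‖ ≠ 0 := norm_ne_zero_iff.mpr hz
    have hy : ‖(‖z‖⁻¹ • z)‖ = 1 := by
      rw [norm_smul, norm_inv, norm_norm, inv_mul_cancel₀ hn]
    have h1 := h _ hy
    rw [map_smul] at h1
    simp only [smul_eq_mul, abs_mul, abs_inv, abs_norm] at h1
    have h2 : ‖z‖ * (‖z‖⁻¹ * |T z|) ≤ ‖z‖ * c := mul_le_mul_of_nonneg_left h1 (norm_nonneg z)
    rw [← mul_assoc, mul_inv_cancel₀ hn, one_mul] at h2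
    simpa [Real.norm_eq_abs, mul_comm] using h2

private lemma lip_seg' {X : Type*} [NormedAddCommGroup X] [NormedSpace ℝ X]
    (f : X → ℝ) (gf : X → X →L[ℝ] ℝ)
    (hgf : ∀ p v : X, HasLineDerivAt ℝ f (gf p v) p v) (L : ℝ) (w z : X)
    (hL : ∀ s ∈ Icc (0:ℝ) 1, ‖gf (w + s • (z - w))‖ ≤ L) :
    |f z - f w| ≤ L * ‖z - w‖ := by
  have hf : ∀ s ∈ Icc (0:ℝ) 1, HasDerivWithinAt (fun t : ℝ => f (w + t • (z - w)))
      (gf (w + s • (z - w)) (z - w)) (Icc (0:ℝ) 1) s :=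
    fun s _ => (hasDerivAt_along' f gf hgf w (z - w) s).hasDerivWithinAt
  have hb : ∀ s ∈ Ico (0:ℝ) 1, ‖gf (w + s • (z - w)) (z - w)‖ ≤ L * ‖z - w‖ := by
    intro s hs
    calc ‖gf (w + s • (z - w)) (z - w)‖ ≤ ‖gf (w + s • (z - w))‖ * ‖z - w‖ :=
          (gf _).le_opNorm _
      _ ≤ L * ‖z - w‖ := by
          exact mul_le_mul_of_nonneg_right (hL s (Ico_subset_Icc_self hs)) (norm_nonneg _)
  have := norm_image_sub_le_of_norm_deriv_le_segment' hf hb 1 (right_mem_Icc.2 zero_le_one)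
  simpa [Real.norm_eq_abs] using this

theorem gradient_uniformly_continuous_on_bounded
    {X : Type*} [NormedAddCommGroup X] [NormedSpace ℝ X] [CompleteSpace X]
    (f : X → ℝ) (gf : X → X →L[ℝ] ℝ)
    (hgf : ∀ p v : X, HasLineDerivAt ℝ f (gf p v) p v)
    (hbdd : ∀ B : Set X, Bornology.IsBounded B → Bornology.IsBounded (f '' B))
    (hUF : ∀ B : Set X, Bornology.IsBounded B → ∀ ε : ℝ, 0 < ε → ∃ δ : ℝ, 0 < δ ∧
      ∀ t : ℝ, 0 < t → t < δ → ∀ x ∈ B, ∀ y : X, ‖y‖ = 1 →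
        |f (x + t • y) - f x - t * gf x y| ≤ ε * t) :
    ∀ B : Set X, Bornology.IsBounded B → ∀ ε : ℝ, 0 < ε → ∃ δ : ℝ, 0 < δ ∧
      ∀ x ∈ B, ∀ x' ∈ B, ‖x - x'‖ < δ → ‖gf x - gf x'‖ < ε := by
  intro B hB ε hε
  rcases B.eq_empty_or_nonempty with rfl | hBne
  · exact ⟨1, one_pos, fun x hx => absurd hx (notMem_empty x)⟩
  -- enlarged bounded sets
  set B2 : Set X := B + Metric.closedBall (0:X) 2 with hB2def
  set C : Set X := B + Metric.closedBall (0:X) 3 with hCdef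
  have hB2 : Bornology.IsBounded B2 := hB.add (Metric.isBounded_closedBall)
  have hC : Bornology.IsBounded C := hB.add (Metric.isBounded_closedBall)
  have hmemB2 : ∀ b ∈ B, ∀ v : X, ‖v‖ ≤ 2 → b + v ∈ B2 := by
    intro b hb v hv
    exact Set.add_mem_add hb (by simpa [Metric.mem_closedBall, dist_eq_norm] using hv)
  have hmemC : ∀ b ∈ B, ∀ v : X, ‖v‖ ≤ 3 → b + v ∈ C := by
    intro b hb v hv
    exact Set.add_mem_add hb (by simpa [Metric.mem_closedBall, dist_eq_norm] using hv)
  -- bound for f on C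
  obtain ⟨M, hM⟩ := (isBounded_iff_forall_norm_le).1 (hbdd C hC)
  have hMz : ∀ z ∈ C, |f z| ≤ M := fun z hz => by
    simpa [Real.norm_eq_abs] using hM (f z) ⟨z, hz, rfl⟩
  -- bound for gf on B2
  obtain ⟨δ₂, hδ₂, hUF2⟩ := hUF B2 hB2 1 one_pos
  set τ : ℝ := min (δ₂ / 2) 1 with hτdef
  have hτ0 : 0 < τ := lt_min (by linarith) one_pos
  have hτδ : τ < δ₂ := lt_of_le_of_lt (min_le_left _ _) (by linarith)
  have hτ1 : τ ≤ 1 := min_le_right _ _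
  set L0 : ℝ := (2 * M + τ) / τ with hL0def
  have hgfB2 : ∀ p ∈ B2, ‖gf p‖ ≤ L0 := by
    intro p hp
    have hM0 : 0 ≤ M := by
      obtain ⟨b, hb⟩ := hBne
      exact le_trans (abs_nonneg _) (hMz (b + 0) (hmemC b hb 0 (by simp)))
    refine opnorm_unit' _ _ (by positivity) fun y hy => ?_
    have h1 := hUF2 τ hτ0 hτδ p hp y hy
    -- p ∈ C and p + τ • y ∈ C
    obtain ⟨b, hb, v, hv, rfl⟩ := Set.mem_add.1 hp
    have hvn : ‖v‖ ≤ 2 := by simpa [Metric.mem_closedBall, dist_eq_norm] using hv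
    have hpC : b + v ∈ C := hmemC b hb v (le_trans hvn (by norm_num))
    have hpyC : b + v + τ • y ∈ C := by
      have : b + v + τ • y = b + (v + τ • y) := by abel
      rw [this]
      refine hmemC b hb _ (le_trans (norm_add_le _ _) ?_)
      rw [norm_smul, Real.norm_eq_abs, abs_of_pos hτ0, hy, mul_one]
      linarith
    have h2 : |τ * gf (b + v) y| ≤ 2 * M + τ := by
      have := hMz _ hpC
      have := hMz _ hpyC
      have habs : |f (b + v + τ • y) - f (b + v)| ≤ 2 * M := by
        calc |f (b + v + τ • y) - f (b + v)| ≤ |f (b + v + τ • y)| + |f (b + v)| := abs_sub _ _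
          _ ≤ 2 * M := by linarith [hMz _ hpC, hMz _ hpyC]
      calc |τ * gf (b + v) y|
          = |f (b + v + τ • y) - f (b + v) - (f (b + v + τ • y) - f (b + v) - τ * gf (b + v) y)| :=
            by ring_nf
        _ ≤ |f (b + v + τ • y) - f (b + v)| + |f (b + v + τ • y) - f (b + v) - τ * gf (b + v) y| :=
            abs_sub _ _
        _ ≤ 2 * M + τ := by linarith [h1]
    rw [abs_mul, abs_of_pos hτ0] at h2
    show |gf (b + v) y| ≤ (2 * M + τ) / τ
    rw [le_div_iff₀ hτ0, mul_comm]
    linarith [h2]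
  have hL0pos : 0 < L0 + 1 := by
    obtain ⟨b, hb⟩ := hBne
    have : 0 ≤ L0 := le_trans (norm_nonneg _) (hgfB2 (b + 0) (hmemB2 b hb 0 (by simp)))
    linarith
  set L : ℝ := L0 + 1 with hLdef
  -- uniform Fréchet on B with ε/8
  obtain ⟨δ₁, hδ₁, hUF1⟩ := hUF B hB (ε / 8) (by linarith)
  set t : ℝ := min (δ₁ / 2) 1 with htdef
  have ht0 : 0 < t := lt_min (by linarith) one_pos
  have htδ : t < δ₁ := lt_of_le_of_lt (min_le_left _ _) (by linarith)
  have ht1 : t ≤ 1 := min_le_right _ _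
  refine ⟨min 1 (ε * t / (8 * L)), lt_min one_pos (by positivity), ?_⟩
  intro x hx x' hx' hxx'
  have hxx1 : ‖x - x'‖ < 1 := lt_of_lt_of_le hxx' (min_le_left _ _)
  have hxx2 : ‖x - x'‖ < ε * t / (8 * L) := lt_of_lt_of_le hxx' (min_le_right _ _)
  -- Lipschitz estimates
  have hlip1 : |f x - f x'| ≤ L * ‖x - x'‖ := by
    refine lip_seg' f gf hgf L x' x fun s hs => ?_
    refine le_trans (hgfB2 _ ?_) (by simp [hLdef])
    refine hmemB2 x' hx' _ ?_
    rw [norm_smul, Real.norm_eq_abs, abs_of_nonneg hs.1]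
    calc s * ‖x - x'‖ ≤ 1 * 1 :=
        mul_le_mul hs.2 (le_of_lt hxx1) (norm_nonneg _) zero_le_one
      _ ≤ 2 := by norm_num
  have hlip2 : ∀ y : X, ‖y‖ = 1 → |f (x + t • y) - f (x' + t • y)| ≤ L * ‖x - x'‖ := by
    intro y hy
    have h := lip_seg' f gf hgf L (x' + t • y) (x + t • y) fun s hs => by
      refine le_trans (hgfB2 _ ?_) (by simp [hLdef])
      have heq : x' + t • y + s • (x + t • y - (x' + t • y)) = x' + (t • y + s • (x - x')) := by
        module
      rw [heq]
      refine hmemB2 x' hx' _ (le_trans (norm_add_le _ _) ?_)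
      rw [norm_smul, norm_smul, Real.norm_eq_abs, Real.norm_eq_abs, hy, mul_one,
        abs_of_pos ht0, abs_of_nonneg hs.1]
      have h1 : s * ‖x - x'‖ ≤ 1 := le_trans
        (mul_le_mul hs.2 (le_of_lt hxx1) (norm_nonneg _) zero_le_one) (by norm_num)
      linarith
    have heq2 : x' + t • y + (x + t • y - (x' + t • y)) = x + t • y := by abel
    calc |f (x + t • y) - f (x' + t • y)|
        ≤ L * ‖x + t • y - (x' + t • y)‖ := h
      _ = L * ‖x - x'‖ := by rw [show x + t • y - (x' + t • y) = x - x' by abel]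
  -- pointwise estimate on unit vectors
  have hpt : ∀ y : X, ‖y‖ = 1 → |(gf x - gf x') y| ≤ ε / 2 := by
    intro y hy
    have hA := hUF1 t ht0 htδ x hx y hy
    have hA' := hUF1 t ht0 htδ x' hx' y hy
    have hkey : |t * gf x y - t * gf x' y| ≤ ε / 8 * t + ε / 8 * t + L * ‖x - x'‖ + L * ‖x - x'‖ := by
      have hid : t * gf x y - t * gf x' y =
          -(f (x + t • y) - f x - t * gf x y) + (f (x' + t • y) - f x' - t * gf x' y)
          + (f (x + t • y) - f (x' + t • y)) - (f x - f x') := by ring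
      have h5 := hlip2 y hy
      have e1 := le_abs_self (f (x + t • y) - f x - t * gf x y)
      have e1' := neg_abs_le (f (x + t • y) - f x - t * gf x y)
      have e2 := le_abs_self (f (x' + t • y) - f x' - t * gf x' y)
      have e2' := neg_abs_le (f (x' + t • y) - f x' - t * gf x' y)
      have e3 := le_abs_self (f (x + t • y) - f (x' + t • y))
      have e3' := neg_abs_le (f (x + t • y) - f (x' + t • y))
      have e4 := le_abs_self (f x - f x')
      have e4' := neg_abs_le (f x - f x')
      rw [hid, abs_le]
      have hh1 : |f (x + t • y) - f x - t * gf x y| ≤ ε / 8 * t := hA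
      have hh2 : |f (x' + t • y) - f x' - t * gf x' y| ≤ ε / 8 * t := hA'
      have hh3 : |f x - f x'| ≤ L * ‖x - x'‖ := hlip1
      clear_value t L L0 τ
      constructor <;> linarith
    have hsub : t * gf x y - t * gf x' y = t * (gf x y - gf x' y) := by ring
    rw [hsub, abs_mul, abs_of_pos ht0] at hkey
    have hLx : L * ‖x - x'‖ < ε * t / 8 := by
      have := mul_lt_mul_of_pos_left hxx2 (show (0:ℝ) < L from hL0pos)
      calc L * ‖x - x'‖ < L * (ε * t / (8 * L)) := this
        _ = ε * t / 8 := by field_simp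
    have : t * |gf x y - gf x' y| ≤ ε / 8 * t + ε / 8 * t + ε * t / 8 + ε * t / 8 := by linarith
    have h3 : |gf x y - gf x' y| ≤ ε / 2 := by
      nlinarith [abs_nonneg (gf x y - gf x' y)]
    simpa using h3
  have := opnorm_unit' (gf x - gf x') (ε / 2) (by linarith) (by
    intro y hy; simpa using hpt y hy)
  linarith
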